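/- For every continuous compactly supported function f : G → A and every ε > 0, there exists a continuous compactly supported function g : G → A such that the support of g is contained in the support of f, sup_{x∈G} ‖f(x) − g(x)‖ ≤ ε, and the set {(x, yH) ∈ G × (G/H) : g(x) ∉ J_{yH}} has compact closure in G × (G/H). (In other words, the functions whose 'fiberwise image' over G × G/H is compactly supported are uniformly dense among the compactly supported continuous A-valued functions, with control of supports.) -/

import Mathlib

open scoped MultiplierAlgebra ZeroAtInfty

/-- The ideal `J_{yH}` of the `C₀(G/H)`-algebra `A`: the closed linear span of
`{Φ(φ)·a : φ ∈ C₀(G/H), φ(yH) = 0, a ∈ A}`.  Here `Φ(φ)·a` is expressed as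
`(Φ φ).fst a`, the left part of the double centralizer `Φ φ` applied to `a`. -/
noncomputable def idealJ {G : Type*} [Group G] [TopologicalSpace G] [IsTopologicalGroup G]
    (H : Subgroup G) {A : Type*} [NonUnitalCStarAlgebra A]
    (Φ : C₀(G ⧸ H, ℂ) →⋆ₙₐ[ℂ] 𝓜(ℂ, A)) (yH : G ⧸ H) : Set A :=
  closure (Submodule.span ℂ
    {b : A | ∃ (φ : C₀(G ⧸ H, ℂ)) (a : A), φ yH = 0 ∧ b = (Φ φ).fst a} : Set A)

section DCFSAux

variable {Q : Type*} [TopologicalSpace Q] {A : Type*} [NonUnitalCStarAlgebra A]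

theorem DCFS.approx_all (Φ : C₀(Q, ℂ) →⋆ₙₐ[ℂ] 𝓜(ℂ, A))
    (hnondeg : closure (Submodule.span ℂ
        {b : A | ∃ (φ : C₀(Q, ℂ)) (a : A), b = (Φ φ).fst a} : Set A) = Set.univ)
    (a : A) (δ : ℝ) (hδ : 0 < δ) :
    ∃ K : Set Q, IsCompact K ∧ ∀ φ : C₀(Q, ℂ), ‖φ‖ ≤ 1 → Set.EqOn (⇑φ) 1 K →
      ‖(Φ φ).fst a - a‖ ≤ δ := by
  have key : ∀ (φ : C₀(Q, ℂ)) (x : A), ‖(Φ φ).fst x‖ ≤ ‖φ‖ * ‖x‖ := by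
    intro φ x
    calc ‖(Φ φ).fst x‖ ≤ ‖(Φ φ).fst‖ * ‖x‖ := (Φ φ).fst.le_opNorm x
    _ ≤ ‖φ‖ * ‖x‖ := by
      refine mul_le_mul_of_nonneg_right ?_ (norm_nonneg x)
      rw [DoubleCentralizer.norm_fst]; exact NonUnitalStarAlgHom.norm_apply_le Φ φ
  set S : Set A := {b : A | ∃ (φ : C₀(Q, ℂ)) (a : A), b = (Φ φ).fst a} with hS
  set P : A → Prop := fun a => ∀ δ : ℝ, 0 < δ → ∃ K : Set Q, IsCompact K ∧
      ∀ φ : C₀(Q, ℂ), ‖φ‖ ≤ 1 → Set.EqOn (⇑φ) 1 K → ‖(Φ φ).fst a - a‖ ≤ δ with hP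
  have hspan : ∀ a ∈ Submodule.span ℂ S, P a := by
    intro a ha
    induction ha using Submodule.span_induction with
    | mem x hx =>
      obtain ⟨ψ, b, rfl⟩ := hx
      intro δ hδ
      have hb1 : (0:ℝ) < ‖b‖ + 1 := by positivity
      set η : ℝ := δ / (2 * (‖b‖ + 1)) with hη
      have hηpos : 0 < η := by positivity
      have hmem : {y : Q | ‖ψ y‖ < η} ∈ Filter.cocompact Q := by
        have h0 : Filter.Tendsto (⇑ψ) (Filter.cocompact Q) (nhds 0) :=
          ZeroAtInftyContinuousMapClass.zero_at_infty ψ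
        have := h0.eventually (Metric.ball_mem_nhds (0:ℂ) hηpos)
        show ∀ᶠ y in Filter.cocompact Q, ‖ψ y‖ < η
        simpa [Metric.mem_ball, dist_zero_right] using this
      obtain ⟨K, hK, hKsub⟩ := Filter.mem_cocompact.mp hmem
      refine ⟨K, hK, fun φ hφ1 hφK => ?_⟩
      have heq : (Φ φ).fst ((Φ ψ).fst b) - (Φ ψ).fst b = (Φ (φ * ψ - ψ)).fst b := by
        rw [map_sub, map_mul, DoubleCentralizer.sub_fst, DoubleCentralizer.mul_fst,
          ContinuousLinearMap.sub_apply, ContinuousLinearMap.mul_apply]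
      rw [heq]
      have hnorm : ‖φ * ψ - ψ‖ ≤ 2 * η := by
        rw [← ZeroAtInftyContinuousMap.norm_toBCF_eq_norm]
        refine (BoundedContinuousFunction.norm_le (by positivity)).mpr fun y => ?_
        by_cases hy : y ∈ K
        · have h1 : φ y = 1 := hφK hy
          show ‖φ y * ψ y - ψ y‖ ≤ 2 * η
          rw [h1, one_mul, sub_self, norm_zero]
          positivity
        · have hψy : ‖ψ y‖ < η := hKsub hy
          show ‖φ y * ψ y - ψ y‖ ≤ 2 * η
          have hφy : ‖φ y‖ ≤ 1 := by
            refine le_trans ?_ hφ1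
            rw [← ZeroAtInftyContinuousMap.norm_toBCF_eq_norm]
            exact φ.toBCF.norm_coe_le_norm y
          calc ‖φ y * ψ y - ψ y‖ = ‖(φ y - 1) * ψ y‖ := by ring_nf
          _ = ‖φ y - 1‖ * ‖ψ y‖ := norm_mul _ _
          _ ≤ 2 * η := by
              refine mul_le_mul ?_ hψy.le (norm_nonneg _) (by norm_num)
              calc ‖φ y - 1‖ ≤ ‖φ y‖ + ‖(1:ℂ)‖ := norm_sub_le _ _
              _ ≤ 2 := by rw [norm_one]; linarith
      calc ‖(Φ (φ * ψ - ψ)).fst b‖ ≤ ‖φ * ψ - ψ‖ * ‖b‖ := key _ _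
      _ ≤ 2 * η * ‖b‖ := by gcongr
      _ = δ * (‖b‖ / (‖b‖ + 1)) := by rw [hη]; field_simp
      _ ≤ δ * 1 := by
          gcongr
          rw [div_le_one hb1]; linarith
      _ = δ := mul_one δ
    | zero =>
      intro δ hδ
      exact ⟨∅, isCompact_empty, fun φ _ _ => by simp [hδ.le]⟩
    | add x y hx hy hPx hPy =>
      intro δ hδ
      obtain ⟨K₁, hK₁, h₁⟩ := hPx (δ/2) (by positivity)
      obtain ⟨K₂, hK₂, h₂⟩ := hPy (δ/2) (by positivity)
      refine ⟨K₁ ∪ K₂, hK₁.union hK₂, fun φ hφ1 hφK => ?_⟩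
      have e1 := h₁ φ hφ1 (hφK.mono Set.subset_union_left)
      have e2 := h₂ φ hφ1 (hφK.mono Set.subset_union_right)
      calc ‖(Φ φ).fst (x + y) - (x + y)‖
          = ‖((Φ φ).fst x - x) + ((Φ φ).fst y - y)‖ := by rw [map_add]; congr 1; abel
      _ ≤ ‖(Φ φ).fst x - x‖ + ‖(Φ φ).fst y - y‖ := norm_add_le _ _
      _ ≤ δ/2 + δ/2 := add_le_add e1 e2
      _ = δ := by ring
    | smul c x hx hPx =>
      intro δ hδ
      have hc1 : (0:ℝ) < ‖c‖ + 1 := by positivity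
      obtain ⟨K, hK, h⟩ := hPx (δ / (‖c‖ + 1)) (by positivity)
      refine ⟨K, hK, fun φ hφ1 hφK => ?_⟩
      calc ‖(Φ φ).fst (c • x) - c • x‖ = ‖c • ((Φ φ).fst x - x)‖ := by
            rw [map_smul, ← smul_sub]
      _ = ‖c‖ * ‖(Φ φ).fst x - x‖ := norm_smul _ _
      _ ≤ ‖c‖ * (δ / (‖c‖ + 1)) := by gcongr; exact h φ hφ1 hφK
      _ ≤ (‖c‖ + 1) * (δ / (‖c‖ + 1)) := by gcongr; linarith
      _ = δ := by field_simp
  -- closure step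
  have hmem : a ∈ closure ((Submodule.span ℂ S : Submodule ℂ A) : Set A) := by
    rw [hnondeg]; trivial
  obtain ⟨c, hc, hac⟩ := Metric.mem_closure_iff.mp hmem (δ/3) (by positivity)
  obtain ⟨K, hK, h⟩ := hspan c hc (δ/3) (by positivity)
  refine ⟨K, hK, fun φ hφ1 hφK => ?_⟩
  have hdist : ‖a - c‖ ≤ δ/3 := by
    rw [← dist_eq_norm]; exact hac.le
  calc ‖(Φ φ).fst a - a‖
      = ‖(Φ φ).fst (a - c) + ((Φ φ).fst c - c) + (c - a)‖ := by rw [map_sub]; congr 1; abel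
  _ ≤ ‖(Φ φ).fst (a - c)‖ + ‖(Φ φ).fst c - c‖ + ‖c - a‖ := norm_add₃_le
  _ ≤ (‖φ‖ * ‖a - c‖) + δ/3 + ‖a - c‖ := by
      gcongr
      · exact key _ _
      · exact h φ hφ1 hφK
      · rw [norm_sub_rev]
  _ ≤ (1 * (δ/3)) + δ/3 + δ/3 := by
      have h1 : ‖φ‖ * ‖a - c‖ ≤ 1 * (δ/3) := mul_le_mul hφ1 hdist (norm_nonneg _) zero_le_one
      linarith
  _ = δ := by ring

theorem DCFS.approx_compact (Φ : C₀(Q, ℂ) →⋆ₙₐ[ℂ] 𝓜(ℂ, A))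
    (hnondeg : closure (Submodule.span ℂ
        {b : A | ∃ (φ : C₀(Q, ℂ)) (a : A), b = (Φ φ).fst a} : Set A) = Set.univ)
    {T : Set A} (hT : IsCompact T) (ε : ℝ) (hε : 0 < ε) :
    ∃ K : Set Q, IsCompact K ∧ ∀ φ : C₀(Q, ℂ), ‖φ‖ ≤ 1 → Set.EqOn (⇑φ) 1 K →
      ∀ a ∈ T, ‖(Φ φ).fst a - a‖ ≤ ε := by
  have key : ∀ (φ : C₀(Q, ℂ)) (x : A), ‖φ‖ ≤ 1 → ‖(Φ φ).fst x‖ ≤ ‖x‖ := by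
    intro φ x hφ
    calc ‖(Φ φ).fst x‖ ≤ ‖(Φ φ).fst‖ * ‖x‖ := (Φ φ).fst.le_opNorm x
    _ ≤ 1 * ‖x‖ := by
        refine mul_le_mul_of_nonneg_right ?_ (norm_nonneg x)
        rw [DoubleCentralizer.norm_fst]
        exact le_trans (NonUnitalStarAlgHom.norm_apply_le Φ φ) hφ
    _ = ‖x‖ := one_mul _
  obtain ⟨t, htT, hcover⟩ := hT.elim_nhds_subcover (fun a => Metric.ball a (ε/3))
    (fun a _ => Metric.ball_mem_nhds a (by positivity))
  choose Kf hKf hKfp using fun c : A => DCFS.approx_all Φ hnondeg c (ε/3) (by positivity)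
  refine ⟨⋃ c ∈ t, Kf c, t.finite_toSet.isCompact_biUnion (fun c _ => hKf c),
    fun φ hφ1 hφK a ha => ?_⟩
  obtain ⟨c, hct, hc⟩ := Set.mem_iUnion₂.mp (hcover ha)
  have hd : ‖a - c‖ ≤ ε/3 := by
    rw [← dist_eq_norm]; exact (Metric.mem_ball.mp hc).le
  have h1 := hKfp c φ hφ1 (hφK.mono (Set.subset_biUnion_of_mem hct))
  calc ‖(Φ φ).fst a - a‖
      = ‖(Φ φ).fst (a - c) + ((Φ φ).fst c - c) + (c - a)‖ := by
        rw [map_sub]; congr 1; abel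
  _ ≤ ‖(Φ φ).fst (a - c)‖ + ‖(Φ φ).fst c - c‖ + ‖c - a‖ := norm_add₃_le
  _ ≤ ε/3 + ε/3 + ε/3 := by
      have h2 : ‖(Φ φ).fst (a - c)‖ ≤ ε/3 := le_trans (key φ (a - c) hφ1) hd
      have hca : ‖c - a‖ ≤ ε/3 := by rw [norm_sub_rev]; exact hd
      gcongr
  _ = ε := by ring

theorem DCFS.t2_quotient {G : Type*} [Group G] [TopologicalSpace G] [IsTopologicalGroup G]
    (H : Subgroup G) (hH : IsClosed (H : Set G)) : T2Space (G ⧸ H) := by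
  rw [t2_iff_isClosed_diagonal]
  have hq : IsOpenQuotientMap
      (fun p : G × G => ((p.1 : G ⧸ H), (p.2 : G ⧸ H))) :=
    QuotientGroup.isOpenQuotientMap_mk.prodMap QuotientGroup.isOpenQuotientMap_mk
  rw [← hq.isQuotientMap.isClosed_preimage]
  have : (fun p : G × G => ((p.1 : G ⧸ H), (p.2 : G ⧸ H))) ⁻¹' (Set.diagonal (G ⧸ H))
      = (fun p : G × G => p.1⁻¹ * p.2) ⁻¹' (H : Set G) := by
    ext p
    simp [Set.mem_diagonal_iff, QuotientGroup.eq]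
  rw [this]
  exact hH.preimage (continuous_fst.inv.mul continuous_snd)

end DCFSAux

/-- For every continuous compactly supported `f : G → A` and `ε > 0`, there is a continuous
compactly supported `g : G → A` with support contained in that of `f`, uniformly within `ε`
of `f`, such that `{(x, yH) : g(x) ∉ J_{yH}}` has compact closure in `G × (G/H)`. -/
theorem dense_compactly_fibered_sections
    {G : Type*} [Group G] [TopologicalSpace G] [IsTopologicalGroup G]
    [LocallyCompactSpace G] [T2Space G] [SecondCountableTopology G]
    (H : Subgroup G) (hH : IsClosed (H : Set G))
    {A : Type*} [NonUnitalCStarAlgebra A]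
    (Φ : C₀(G ⧸ H, ℂ) →⋆ₙₐ[ℂ] 𝓜(ℂ, A))
    -- centrality: `Φ(φ)·a = a·Φ(φ)` for all `φ` and `a`
    (hcentral : ∀ (φ : C₀(G ⧸ H, ℂ)) (a : A), (Φ φ).fst a = (Φ φ).snd a)
    -- nondegeneracy: the closed linear span of `{Φ(φ)·a}` is all of `A`
    (hnondeg : closure (Submodule.span ℂ
        {b : A | ∃ (φ : C₀(G ⧸ H, ℂ)) (a : A), b = (Φ φ).fst a} : Set A) = Set.univ)
    (f : G → A) (hf : Continuous f) (hf' : HasCompactSupport f)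
    (ε : ℝ) (hε : 0 < ε) :
    ∃ g : G → A, Continuous g ∧ HasCompactSupport g ∧
      Function.support g ⊆ Function.support f ∧
      (⨆ x : G, ‖f x - g x‖) ≤ ε ∧
      IsCompact (closure {p : G × (G ⧸ H) | g p.1 ∉ idealJ H Φ p.2}) := by
  haveI hT2 : T2Space (G ⧸ H) := DCFS.t2_quotient H hH
  have hTc : IsCompact (f '' tsupport f) := hf'.image hf
  obtain ⟨K, hK, hKp⟩ := DCFS.approx_compact Φ hnondeg hTc ε hε
  obtain ⟨φ₀, hφ₀K, -, hφ₀supp, hφ₀mem⟩ :=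
    exists_continuous_one_zero_of_isCompact hK isClosed_empty (Set.disjoint_empty _)
  have hccs : HasCompactSupport (fun y => (φ₀ y : ℂ)) :=
    hφ₀supp.comp_left (g := Complex.ofReal) Complex.ofReal_zero
  let φ : C₀(G ⧸ H, ℂ) :=
    ⟨⟨fun y => (φ₀ y : ℂ), Complex.continuous_ofReal.comp φ₀.continuous⟩,
      hccs.is_zero_at_infty⟩
  have hφ1 : ‖φ‖ ≤ 1 := by
    rw [← ZeroAtInftyContinuousMap.norm_toBCF_eq_norm]
    refine (BoundedContinuousFunction.norm_le zero_le_one).mpr fun y => ?_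
    show ‖(φ₀ y : ℂ)‖ ≤ 1
    rw [Complex.norm_real, Real.norm_eq_abs, abs_le]
    exact ⟨by linarith [(hφ₀mem y).1], (hφ₀mem y).2⟩
  have hφK : Set.EqOn (⇑φ) 1 K := by
    intro y hy
    have h1 : φ₀ y = 1 := hφ₀K hy
    show ((φ₀ y : ℝ) : ℂ) = 1
    rw [h1, Complex.ofReal_one]
  refine ⟨fun x => (Φ φ).fst (f x), ((Φ φ).fst.continuous).comp hf, ?_, ?_, ?_, ?_⟩
  · -- compact support
    refine hf'.mono' ?_
    refine (Function.support_subset_iff'.mpr fun x hx => ?_).trans subset_closure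
    rw [Function.notMem_support.mp hx, map_zero]
  · -- support inclusion
    refine Function.support_subset_iff'.mpr fun x hx => ?_
    rw [Function.notMem_support.mp hx, map_zero]
  · -- uniform bound
    haveI : Nonempty G := ⟨1⟩
    refine ciSup_le fun x => ?_
    show ‖f x - (Φ φ).fst (f x)‖ ≤ ε
    by_cases hx : x ∈ tsupport f
    · rw [norm_sub_rev]
      exact hKp φ hφ1 hφK (f x) ⟨x, hx, rfl⟩
    · have h0 : f x = 0 := image_eq_zero_of_notMem_tsupport hx
      rw [h0, map_zero, sub_zero, norm_zero]
      exact hε.le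
  · -- compactness of the bad set
    have hbad : {p : G × (G ⧸ H) | (Φ φ).fst (f p.1) ∉ idealJ H Φ p.2} ⊆
        tsupport f ×ˢ tsupport φ₀ := by
      rintro ⟨x, y⟩ hp
      simp only [Set.mem_setOf_eq] at hp
      refine Set.mem_prod.mpr ⟨?_, ?_⟩
      · by_contra hx
        refine hp ?_
        rw [image_eq_zero_of_notMem_tsupport hx, map_zero]
        exact subset_closure (Submodule.zero_mem _)
      · by_contra hy
        refine hp ?_
        have hy0 : φ₀ y = 0 := image_eq_zero_of_notMem_tsupport hy
        have hφy : φ y = 0 := by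
          show ((φ₀ y : ℝ) : ℂ) = 0
          rw [hy0, Complex.ofReal_zero]
        exact subset_closure (Submodule.subset_span ⟨φ, f x, hφy, rfl⟩)
    have hcomp : IsCompact (tsupport f ×ˢ tsupport φ₀) := hf'.prod hφ₀supp
    exact hcomp.of_isClosed_subset isClosed_closure
      (closure_minimal hbad ((isClosed_tsupport f).prod (isClosed_tsupport (⇑φ₀))))
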